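/- Let H(z,w) ∈ ℂ[z,w] be a homogeneous polynomial of degree m ≥ 2, let ℓ(z,w) = az + bw be a nonzero linear form, and let 1 ≤ k < m. Suppose ℓ^k divides H but ℓ^{k+1} does not. Then ℓ^{2k−2} divides Hess(H) but ℓ^{2k−1} does not, and ℓ^{3k−2} divides Δ_H but ℓ^{3k−1} does not. (For k = 1 the first assertion means that ℓ does not divide Hess(H).) -/

import Mathlib

open MvPolynomial

/-- The Hessian `Hess(H) = H_zz H_ww − H_zw²` of a binary form. -/
noncomputable def hess (H : MvPolynomial (Fin 2) ℂ) : MvPolynomial (Fin 2) ℂ :=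
  pderiv (0 : Fin 2) (pderiv (0 : Fin 2) H) * pderiv (1 : Fin 2) (pderiv (1 : Fin 2) H)
    - (pderiv (1 : Fin 2) (pderiv (0 : Fin 2) H)) ^ 2

/-- `Δ_H = 2 H_z H_w H_zw − H_zz H_w² − H_z² H_ww` of a binary form. -/
noncomputable def deltaH (H : MvPolynomial (Fin 2) ℂ) : MvPolynomial (Fin 2) ℂ :=
  2 * pderiv (0 : Fin 2) H * pderiv (1 : Fin 2) H
      * pderiv (1 : Fin 2) (pderiv (0 : Fin 2) H)
    - pderiv (0 : Fin 2) (pderiv (0 : Fin 2) H) * (pderiv (1 : Fin 2) H) ^ 2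
    - (pderiv (0 : Fin 2) H) ^ 2 * pderiv (1 : Fin 2) (pderiv (1 : Fin 2) H)

namespace Stmt7Aux


lemma weight_two (d : Fin 2 →₀ ℕ) :
    (Finsupp.weight (1 : Fin 2 → ℕ)) d = d 0 + d 1 := by
  rw [Finsupp.weight_apply, Finsupp.sum_fintype]
  · simp [Fin.sum_univ_two]
  · intro i; simp

lemma X_mul_pderiv_monomial (i : Fin 2) (d : Fin 2 →₀ ℕ) (c : ℂ) :
    X i * pderiv i (monomial d c) = (d i) • monomial d c := by
  rw [pderiv_monomial]
  by_cases h : d i = 0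
  · simp [h]
  · have hs : Finsupp.single i 1 + (d - Finsupp.single i 1) = d := by
      ext j
      by_cases hj : j = i
      · subst hj
        simp only [Finsupp.add_apply, Finsupp.tsub_apply, Finsupp.single_eq_same]
        omega
      · simp [Finsupp.add_apply, Finsupp.tsub_apply, Finsupp.single_apply,
          (Ne.symm hj : ¬ i = j)]
    rw [X, monomial_mul, one_mul, hs, smul_monomial]
    congr 1
    simp [nsmul_eq_mul, mul_comm]

lemma euler (F : MvPolynomial (Fin 2) ℂ) (n : ℕ) (hF : F.IsHomogeneous n) :
    X 0 * pderiv 0 F + X 1 * pderiv 1 F = (n : ℂ) • F := by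
  conv_lhs => rw [← F.support_sum_monomial_coeff]
  rw [map_sum, map_sum, Finset.mul_sum, Finset.mul_sum, ← Finset.sum_add_distrib]
  conv_rhs => rw [← F.support_sum_monomial_coeff, Finset.smul_sum]
  refine Finset.sum_congr rfl fun d hd => ?_
  rw [X_mul_pderiv_monomial, X_mul_pderiv_monomial]
  have hdeg : d 0 + d 1 = n := by
    have := hF (mem_support_iff.mp hd)
    rwa [weight_two] at this
  rw [← Nat.cast_smul_eq_nsmul ℂ, ← Nat.cast_smul_eq_nsmul ℂ, ← add_smul, ← Nat.cast_add, hdeg]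

lemma deg_two (d : Fin 2 →₀ ℕ) : d.degree = d 0 + d 1 := by
  rw [Finsupp.degree_eq_weight_one]; exact weight_two d

lemma pderiv_pderiv (i j : Fin 2) (F : MvPolynomial (Fin 2) ℂ) :
    pderiv i (pderiv j F) = pderiv j (pderiv i F) := by
  induction F using MvPolynomial.induction_on with
  | C r => simp
  | add p q hp hq => simp [hp, hq]
  | mul_X p s hp =>
    have h2 : ∀ (u v : Fin 2), pderiv u (pderiv v (X s : MvPolynomial (Fin 2) ℂ)) = 0 := by
      intro u v
      rw [pderiv_X]
      rcases eq_or_ne v s with rfl | h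
      · simp
      · simp [Pi.single_apply, h]
    simp only [pderiv_mul, map_add, pderiv_mul, hp, h2]
    ring

lemma isHomogeneous_pderiv {F : MvPolynomial (Fin 2) ℂ} {n : ℕ}
    (hF : F.IsHomogeneous n) (i : Fin 2) : (pderiv i F).IsHomogeneous (n - 1) := by
  conv_lhs => rw [← F.support_sum_monomial_coeff]
  rw [map_sum]
  apply IsHomogeneous.sum
  intro d hd
  rw [pderiv_monomial]
  by_cases h : d i = 0
  · rw [h]; simp only [Nat.cast_zero, mul_zero, monomial_zero]
    exact isHomogeneous_zero _ _ _
  · apply isHomogeneous_monomial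
    have hdeg : d 0 + d 1 = n := by
      have := hF (mem_support_iff.mp hd)
      rwa [weight_two] at this
    have hi : i = 0 ∨ i = 1 := by fin_cases i <;> simp
    rw [deg_two]
    simp only [Finsupp.tsub_apply]
    rcases hi with rfl | rfl <;> simp [Finsupp.single_apply] <;> omega
lemma prime_X0 : Prime (X 0 : MvPolynomial (Fin 2) ℂ) := by
  rw [← MulEquiv.prime_iff (finSuccEquiv ℂ 1).toMulEquiv]
  have h : (finSuccEquiv ℂ 1).toMulEquiv (X 0) = Polynomial.X := by
    simp [finSuccEquiv_X_zero]
  rw [h]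
  exact Polynomial.prime_X

lemma eval01 (G' : MvPolynomial (Fin 2) ℂ) (n : ℕ) (hG' : G'.IsHomogeneous n) :
    eval ![0, 1] G' = coeff (Finsupp.single 1 n) G' := by
  rw [eval_eq']
  rw [Finset.sum_eq_single (Finsupp.single (1 : Fin 2) n)]
  · rw [Fin.prod_univ_two]
    simp [Finsupp.single_apply]
  · intro d hd hne
    have hd0 : d 0 ≠ 0 := by
      intro h0
      apply hne
      have hdeg : d 0 + d 1 = n := by
        have := hG' (mem_support_iff.mp hd)
        rwa [weight_two] at this
      ext j
      have : j = 0 ∨ j = 1 := by fin_cases j <;> simp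
      rcases this with rfl | rfl <;> simp [Finsupp.single_apply] <;> omega
    rw [Fin.prod_univ_two]
    simp [zero_pow hd0]
  · intro h
    simp [notMem_support_iff.mp h]

section Equiv

variable (a b c d : ℂ) (hdet : a * d - b * c = 1)

private noncomputable def ff : Fin 2 → MvPolynomial (Fin 2) ℂ :=
  ![C d * X 0 - C b * X 1, C a * X 1 - C c * X 0]

private noncomputable def gg : Fin 2 → MvPolynomial (Fin 2) ℂ :=
  ![C a * X 0 + C b * X 1, C c * X 0 + C d * X 1]

include hdet in
lemma comp_fg : (aeval (ff a b c d)).comp (aeval (gg a b c d)) =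
    AlgHom.id ℂ (MvPolynomial (Fin 2) ℂ) := by
  have hC : (C a * C d - C b * C c : MvPolynomial (Fin 2) ℂ) = 1 := by
    rw [← C_mul, ← C_mul, ← C_sub, hdet, C_1]
  apply algHom_ext
  intro i
  fin_cases i <;> simp [ff, gg]
  · linear_combination (X (0 : Fin 2) : MvPolynomial (Fin 2) ℂ) * hC
  · linear_combination (X (1 : Fin 2) : MvPolynomial (Fin 2) ℂ) * hC

include hdet in
lemma comp_gf : (aeval (gg a b c d)).comp (aeval (ff a b c d)) =
    AlgHom.id ℂ (MvPolynomial (Fin 2) ℂ) := by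
  have hC : (C a * C d - C b * C c : MvPolynomial (Fin 2) ℂ) = 1 := by
    rw [← C_mul, ← C_mul, ← C_sub, hdet, C_1]
  apply algHom_ext
  intro i
  fin_cases i <;> simp [ff, gg]
  · linear_combination (X (0 : Fin 2) : MvPolynomial (Fin 2) ℂ) * hC
  · linear_combination (X (1 : Fin 2) : MvPolynomial (Fin 2) ℂ) * hC

end Equiv


lemma aeval_eq_eval (v : Fin 2 → ℂ) (p : MvPolynomial (Fin 2) ℂ) :
    aeval v p = eval v p := by
  rw [← coe_aeval_eq_eval]; rfl

lemma exists_cd (a b : ℂ) (hab : ¬ (a = 0 ∧ b = 0)) : ∃ c d : ℂ, a * d - b * c = 1 := by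
  by_cases ha : a = 0
  · have hb : b ≠ 0 := fun hb => hab ⟨ha, hb⟩
    exact ⟨-b⁻¹, 0, by field_simp; ring⟩
  · exact ⟨0, a⁻¹, by field_simp; ring⟩

lemma prime_L (a b : ℂ) (hab : ¬ (a = 0 ∧ b = 0)) :
    Prime (C a * X 0 + C b * X 1 : MvPolynomial (Fin 2) ℂ) := by
  obtain ⟨c, d, hdet⟩ := exists_cd a b hab
  let e : MvPolynomial (Fin 2) ℂ ≃ₐ[ℂ] MvPolynomial (Fin 2) ℂ :=
    AlgEquiv.ofAlgHom (aeval (ff a b c d)) (aeval (gg a b c d))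
      (comp_fg a b c d hdet) (comp_gf a b c d hdet)
  rw [← MulEquiv.prime_iff e.toMulEquiv]
  have hC : (C a * C d - C b * C c : MvPolynomial (Fin 2) ℂ) = 1 := by
    rw [← C_mul, ← C_mul, ← C_sub, hdet, C_1]
  have heL : e (C a * X 0 + C b * X 1) = X 0 := by
    show aeval (ff a b c d) (C a * X 0 + C b * X 1) = X 0
    simp [ff]
    linear_combination (X (0 : Fin 2) : MvPolynomial (Fin 2) ℂ) * hC
  have : e.toMulEquiv (C a * X 0 + C b * X 1) = X 0 := heL
  rw [this]
  exact prime_X0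

lemma eval_ne_zero (a b : ℂ) (hab : ¬ (a = 0 ∧ b = 0)) (G : MvPolynomial (Fin 2) ℂ) (n : ℕ)
    (hG : G.IsHomogeneous n) (hnd : ¬ (C a * X 0 + C b * X 1 : MvPolynomial (Fin 2) ℂ) ∣ G) :
    eval ![-b, a] G ≠ 0 := by
  obtain ⟨c, d, hdet⟩ := exists_cd a b hab
  set G' : MvPolynomial (Fin 2) ℂ := aeval (ff a b c d) G with hG'def
  have hffhom : ∀ i, (ff a b c d i).IsHomogeneous 1 := by
    intro i
    fin_cases i
    · exact (isHomogeneous_C_mul_X d 0).sub (isHomogeneous_C_mul_X b 1)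
    · exact (isHomogeneous_C_mul_X a 1).sub (isHomogeneous_C_mul_X c 0)
  have hG'hom : G'.IsHomogeneous n := by
    simpa [hG'def] using hG.aeval _ hffhom
  have hback : aeval (gg a b c d) G' = G := by
    rw [hG'def]
    have := AlgHom.congr_fun (comp_gf a b c d hdet) G
    simpa using this
  have hggL : aeval (gg a b c d) (X 0 : MvPolynomial (Fin 2) ℂ) = C a * X 0 + C b * X 1 := by
    simp [gg]
  have hX0nd : ¬ (X 0 : MvPolynomial (Fin 2) ℂ) ∣ G' := by
    rintro ⟨W, hW⟩
    apply hnd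
    refine ⟨aeval (gg a b c d) W, ?_⟩
    rw [← hback, hW, map_mul, hggL]
  have hc0 : coeff (Finsupp.single 1 n) G' ≠ 0 := by
    intro h0
    apply hX0nd
    rw [X_dvd_iff_modMonomial_eq_zero]
    apply MvPolynomial.ext
    intro d'
    rw [coeff_zero]
    by_cases hle : Finsupp.single (0 : Fin 2) 1 ≤ d'
    · exact coeff_modMonomial_of_le _ hle
    · rw [coeff_modMonomial_of_not_le _ hle]
      by_contra hne
      have hd0 : d' 0 = 0 := by
        have := Finsupp.single_le_iff.not.mp hle
        omega
      have hdeg : d' 0 + d' 1 = n := by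
        have := hG'hom hne
        rwa [weight_two] at this
      have : d' = Finsupp.single 1 n := by
        ext j
        have hj : j = 0 ∨ j = 1 := by fin_cases j <;> simp
        rcases hj with rfl | rfl <;> simp [Finsupp.single_apply] <;> omega
      exact hne (this ▸ h0)
  have hkey : eval ![-b, a] G = coeff (Finsupp.single 1 n) G' := by
    rw [← hback, ← aeval_eq_eval, comp_aeval_apply]
    have hfun : (fun i => (aeval ![-b, a] : MvPolynomial (Fin 2) ℂ →ₐ[ℂ] ℂ) (gg a b c d i))
        = ![(0 : ℂ), 1] := by
      funext i
      fin_cases i <;> simp [gg]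
      · ring
      · linear_combination hdet
    rw [hfun, aeval_eq_eval, eval01 G' n hG'hom]
  rw [hkey]
  exact hc0


noncomputable def Qp (a b : ℂ) (G : MvPolynomial (Fin 2) ℂ) : MvPolynomial (Fin 2) ℂ :=
  C (a^2) * pderiv 1 (pderiv 1 G) - C (2*a*b) * pderiv 1 (pderiv 0 G)
    + C (b^2) * pderiv 0 (pderiv 0 G)

noncomputable def Dp (a b : ℂ) (G : MvPolynomial (Fin 2) ℂ) : MvPolynomial (Fin 2) ℂ :=
  C a * pderiv 1 G - C b * pderiv 0 G

noncomputable def T3 (a b : ℂ) (k : ℕ) (G : MvPolynomial (Fin 2) ℂ) : MvPolynomial (Fin 2) ℂ :=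
  C (2*(k:ℂ)) * (C a * (pderiv 0 G * pderiv 1 (pderiv 1 G) - pderiv 1 G * pderiv 1 (pderiv 0 G))
    + C b * (pderiv 1 G * pderiv 0 (pderiv 0 G) - pderiv 0 G * pderiv 1 (pderiv 0 G)))

noncomputable def EH (a b : ℂ) (k : ℕ) (G L : MvPolynomial (Fin 2) ℂ) :
    MvPolynomial (Fin 2) ℂ :=
  C ((k:ℂ)*((k:ℂ)-1)) * (G * Qp a b G) - C ((k:ℂ)^2) * (Dp a b G)^2
    + L * T3 a b k G + L^2 * hess G

noncomputable def ED (a b : ℂ) (k : ℕ) (G L : MvPolynomial (Fin 2) ℂ) :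
    MvPolynomial (Fin 2) ℂ :=
  C ((k:ℂ)*((k:ℂ)+1)) * (G * (Dp a b G)^2) - C ((k:ℂ)^2) * (G^2 * Qp a b G)
    - L * (G * T3 a b k G) + L^2 * deltaH G

lemma pderiv_pow' (i : Fin 2) (f : MvPolynomial (Fin 2) ℂ) (t : ℕ) :
    pderiv i (f ^ (t+1)) = C ((t:ℂ)+1) * f^t * pderiv i f := by
  rw [pderiv_pow, Nat.add_sub_cancel]
  congr 2
  rw [← C_eq_coe_nat]
  push_cast
  ring

lemma hess_id_one (L G : MvPolynomial (Fin 2) ℂ) (a b : ℂ)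
    (hLz : pderiv 0 L = C a) (hLw : pderiv 1 L = C b) :
    hess (L ^ 1 * G) = L ^ (2*1-2) * EH a b 1 G L := by
  simp only [pow_one, hess, EH, Qp, Dp, T3, Nat.cast_one, pderiv_mul, map_add, pderiv_C,
    hLz, hLw, zero_mul, add_zero, zero_add, map_mul, map_sub, map_pow, map_add, map_one,
    map_ofNat]
  ring

lemma delta_id_one (L G : MvPolynomial (Fin 2) ℂ) (a b : ℂ)
    (hLz : pderiv 0 L = C a) (hLw : pderiv 1 L = C b) :
    deltaH (L ^ 1 * G) = L ^ (3*1-2) * ED a b 1 G L := by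
  simp only [pow_one, deltaH, ED, Qp, Dp, T3, Nat.cast_one, pderiv_mul, map_add, pderiv_C,
    hLz, hLw, zero_mul, add_zero, zero_add, map_mul, map_sub, map_pow, map_add, map_one,
    map_ofNat, hess]
  ring

lemma hess_id_two (L G : MvPolynomial (Fin 2) ℂ) (a b : ℂ)
    (hLz : pderiv 0 L = C a) (hLw : pderiv 1 L = C b) (j : ℕ) :
    hess (L ^ (j+1+1) * G) = L ^ (2*(j+1+1)-2) * EH a b (j+1+1) G L := by
  have h2 : 2*(j+1+1)-2 = 2*j+2 := by omega
  rw [h2]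
  simp only [hess, EH, Qp, Dp, T3, pderiv_mul, pderiv_pow', map_add, pderiv_C,
    hLz, hLw, zero_mul, add_zero, zero_add, mul_zero, map_mul, map_sub, map_pow, map_add,
    map_one, map_ofNat, Derivation.map_one_eq_zero, Nat.cast_add, Nat.cast_one, Nat.cast_ofNat]
  ring

lemma delta_id_two (L G : MvPolynomial (Fin 2) ℂ) (a b : ℂ)
    (hLz : pderiv 0 L = C a) (hLw : pderiv 1 L = C b) (j : ℕ) :
    deltaH (L ^ (j+1+1) * G) = L ^ (3*(j+1+1)-2) * ED a b (j+1+1) G L := by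
  have h2 : 3*(j+1+1)-2 = 3*j+4 := by omega
  rw [h2]
  simp only [deltaH, ED, Qp, Dp, T3, pderiv_mul, pderiv_pow', map_add, pderiv_C,
    hLz, hLw, zero_mul, add_zero, zero_add, mul_zero, map_mul, map_sub, map_pow, map_add,
    map_one, map_ofNat, Derivation.map_one_eq_zero, Nat.cast_add, Nat.cast_one, Nat.cast_ofNat,
    hess]
  ring


lemma aeval_ff_L (a b c d : ℂ) (hdet : a * d - b * c = 1) :
    aeval (ff a b c d) (C a * X 0 + C b * X 1) = X 0 := by
  have hC : (C a * C d - C b * C c : MvPolynomial (Fin 2) ℂ) = 1 := by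
    rw [← C_mul, ← C_mul, ← C_sub, hdet, C_1]
  simp [ff]
  linear_combination (X (0 : Fin 2) : MvPolynomial (Fin 2) ℂ) * hC

lemma coeff_X0pow_mul (k : ℕ) (d : Fin 2 →₀ ℕ) (φ : MvPolynomial (Fin 2) ℂ) :
    coeff (d + Finsupp.single 0 k) ((X 0 : MvPolynomial (Fin 2) ℂ) ^ k * φ) = coeff d φ := by
  induction k with
  | zero => simp
  | succ t ih =>
    have hs : d + Finsupp.single (0 : Fin 2) (t + 1)
        = Finsupp.single (0 : Fin 2) 1 + (d + Finsupp.single (0 : Fin 2) t) := by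
      ext j
      by_cases h : (0 : Fin 2) = j <;>
        simp [Finsupp.add_apply, Finsupp.single_apply, h] <;> omega
    rw [hs, pow_succ', mul_assoc, coeff_X_mul]
    exact ih

lemma isHomogeneous_of_mul_X0pow {k m : ℕ} {G' : MvPolynomial (Fin 2) ℂ} (hk : k ≤ m)
    (h : ((X 0 : MvPolynomial (Fin 2) ℂ) ^ k * G').IsHomogeneous m) :
    G'.IsHomogeneous (m - k) := by
  intro d hd
  have hcoeff : coeff (d + Finsupp.single 0 k)
      ((X 0 : MvPolynomial (Fin 2) ℂ) ^ k * G') = coeff d G' := coeff_X0pow_mul k d G'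
  have hm := h (d := d + Finsupp.single 0 k) (by rw [hcoeff]; exact hd)
  rw [weight_two] at hm ⊢
  simp only [Finsupp.add_apply, Finsupp.single_apply] at hm
  simp at hm
  omega

end Stmt7Aux

open Stmt7Aux in
/-- let `H` be a binary form of degree `m ≥ 2`, `ℓ = az + bw` a
nonzero linear form, `1 ≤ k < m`, and suppose `ℓ^k ∣ H` but `ℓ^{k+1} ∤ H`.
Then `ℓ^{2k−2} ∣ Hess(H)` but `ℓ^{2k−1} ∤ Hess(H)`, and `ℓ^{3k−2} ∣ Δ_H` but
`ℓ^{3k−1} ∤ Δ_H`. -/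
theorem stmt7 (m : ℕ) (hm : 2 ≤ m) (H : MvPolynomial (Fin 2) ℂ)
    (hH : H.IsHomogeneous m) (a b : ℂ) (hab : (a, b) ≠ (0, 0))
    (L : MvPolynomial (Fin 2) ℂ)
    (hL : L = C a * X (0 : Fin 2) + C b * X (1 : Fin 2))
    (k : ℕ) (hk1 : 1 ≤ k) (hkm : k < m)
    (hdvd : L ^ k ∣ H) (hndvd : ¬ L ^ (k + 1) ∣ H) :
    (L ^ (2 * k - 2) ∣ hess H ∧ ¬ L ^ (2 * k - 1) ∣ hess H) ∧
    (L ^ (3 * k - 2) ∣ deltaH H ∧ ¬ L ^ (3 * k - 1) ∣ deltaH H) := by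
  classical
  have hab' : ¬ (a = 0 ∧ b = 0) := by
    rintro ⟨rfl, rfl⟩; exact hab rfl
  have hprime : Prime L := by rw [hL]; exact prime_L a b hab'
  have hL0 : L ≠ 0 := hprime.ne_zero
  obtain ⟨G, hHG⟩ := hdvd
  have hLG : ¬ L ∣ G := by
    rintro ⟨W, hW⟩
    exact hndvd ⟨W, by rw [hHG, hW]; ring⟩
  -- homogeneity of G
  obtain ⟨c, d, hdet⟩ := exists_cd a b hab'
  have hffhom : ∀ i, (ff a b c d i).IsHomogeneous 1 := by
    intro i
    fin_cases i
    · exact (isHomogeneous_C_mul_X d 0).sub (isHomogeneous_C_mul_X b 1)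
    · exact (isHomogeneous_C_mul_X a 1).sub (isHomogeneous_C_mul_X c 0)
  have hgghom : ∀ i, (gg a b c d i).IsHomogeneous 1 := by
    intro i
    fin_cases i
    · exact (isHomogeneous_C_mul_X a 0).add (isHomogeneous_C_mul_X b 1)
    · exact (isHomogeneous_C_mul_X c 0).add (isHomogeneous_C_mul_X d 1)
  have hG'hom : (aeval (ff a b c d) G).IsHomogeneous (m - k) := by
    apply isHomogeneous_of_mul_X0pow (le_of_lt hkm)
    have heH : (X 0 : MvPolynomial (Fin 2) ℂ) ^ k * aeval (ff a b c d) G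
        = aeval (ff a b c d) H := by
      rw [hHG, map_mul, map_pow, hL, aeval_ff_L a b c d hdet]
    rw [heH]
    simpa using hH.aeval _ hffhom
  have hGhom : G.IsHomogeneous (m - k) := by
    have h2 := hG'hom.aeval (gg a b c d) hgghom
    rw [one_mul] at h2
    have hback := AlgHom.congr_fun (comp_gf a b c d hdet) G
    simp only [AlgHom.coe_comp, Function.comp_apply, AlgHom.coe_id, id_eq] at hback
    rwa [hback] at h2
  -- derivatives of L
  have hLz : pderiv (0 : Fin 2) L = C a := by
    rw [hL]; simp [pderiv_C_mul, pderiv_X]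
  have hLw : pderiv (1 : Fin 2) L = C b := by
    rw [hL]; simp [pderiv_C_mul, pderiv_X]
  -- the two identities
  have hcases : k = 1 ∨ ∃ j, k = j + 1 + 1 := by
    rcases Nat.lt_or_ge k 2 with h | h
    · left; omega
    · right; exact ⟨k - 2, by omega⟩
  have hid1 : hess H = L ^ (2 * k - 2) * EH a b k G L := by
    rw [hHG]
    rcases hcases with rfl | ⟨j, rfl⟩
    · exact hess_id_one L G a b hLz hLw
    · exact hess_id_two L G a b hLz hLw j
  have hid2 : deltaH H = L ^ (3 * k - 2) * ED a b k G L := by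
    rw [hHG]
    rcases hcases with rfl | ⟨j, rfl⟩
    · exact delta_id_one L G a b hLz hLw
    · exact delta_id_two L G a b hLz hLw j
  -- evaluation point
  set v : Fin 2 → ℂ := ![-b, a] with hv
  have hvL : eval v L = 0 := by
    rw [hL]; simp [hv]; ring
  have hg : eval v G ≠ 0 := by
    apply eval_ne_zero a b hab' G (m - k) hGhom
    rw [← hL]; exact hLG
  -- Euler relations at v
  set n' : ℕ := m - k - 1 with hn'
  have hmk : m - k = n' + 1 := by omega
  have hdval : eval v (Dp a b G) = ((n' : ℂ) + 1) * eval v G := by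
    have hE := congrArg (eval v) (euler G (m - k) hGhom)
    rw [smul_eq_C_mul] at hE
    simp only [map_add, map_mul, eval_X, eval_C, hv, Matrix.cons_val_zero,
      Matrix.cons_val_one, Matrix.head_cons] at hE
    simp only [Dp, map_sub, map_mul, eval_C]
    rw [hmk] at hE
    push_cast at hE
    linear_combination hE
  have hDphom : (Dp a b G).IsHomogeneous n' := by
    have h1 := ((isHomogeneous_pderiv hGhom 1).C_mul a).sub
      ((isHomogeneous_pderiv hGhom 0).C_mul b)
    simpa [Dp, hn'] using h1
  have hDz : pderiv (0 : Fin 2) (Dp a b G)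
      = C a * pderiv 1 (pderiv 0 G) - C b * pderiv 0 (pderiv 0 G) := by
    simp only [Dp, map_sub, pderiv_C_mul]
    rw [pderiv_pderiv 0 1]
  have hDw : pderiv (1 : Fin 2) (Dp a b G)
      = C a * pderiv 1 (pderiv 1 G) - C b * pderiv 1 (pderiv 0 G) := by
    simp only [Dp, map_sub, pderiv_C_mul]
  have hqval : eval v (Qp a b G) = (n' : ℂ) * eval v (Dp a b G) := by
    have hE := congrArg (eval v) (euler (Dp a b G) n' hDphom)
    rw [smul_eq_C_mul, hDz, hDw] at hE
    simp only [map_add, map_sub, map_mul, eval_X, eval_C, hv, Matrix.cons_val_zero,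
      Matrix.cons_val_one, Matrix.head_cons] at hE
    rw [← hv] at hE
    have hDpe : eval v (Dp a b G) = a * eval v (pderiv 1 G) - b * eval v (pderiv 0 G) := by
      simp only [Dp, map_sub, map_mul, eval_C]
    simp only [Qp, Dp, map_add, map_sub, map_mul, eval_C]
    linear_combination hE + (n' : ℂ) * hDpe
  -- nonzero constants
  have hk0 : (k : ℂ) ≠ 0 := Nat.cast_ne_zero.mpr (by omega)
  have hn1 : ((n' : ℂ) + 1) ≠ 0 := Nat.cast_add_one_ne_zero n'
  have hg2 : eval v G ^ 2 ≠ 0 := pow_ne_zero _ hg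
  have hg3 : eval v G ^ 3 ≠ 0 := pow_ne_zero _ hg
  have hnk : ((n' : ℂ) + (k : ℂ)) ≠ 0 := by
    have : ((n' + k : ℕ) : ℂ) ≠ 0 := Nat.cast_ne_zero.mpr (by omega)
    push_cast at this
    exact this
  have hnk1 : ((n' : ℂ) + 1 + (k : ℂ)) ≠ 0 := by
    have : ((n' + 1 + k : ℕ) : ℂ) ≠ 0 := Nat.cast_ne_zero.mpr (by omega)
    push_cast at this
    exact this
  constructor
  · refine ⟨⟨EH a b k G L, hid1⟩, ?_⟩
    intro hdd
    rw [hid1] at hdd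
    have hstep : L ^ (2 * k - 2) * L ∣ L ^ (2 * k - 2) * EH a b k G L := by
      rw [← pow_succ]
      have he : 2 * k - 2 + 1 = 2 * k - 1 := by omega
      rw [he]
      exact hdd
    obtain ⟨W, hW⟩ := (mul_dvd_mul_iff_left (pow_ne_zero (2 * k - 2) hL0)).mp hstep
    have heq : (k : ℂ) * ((k : ℂ) - 1) * (eval v G * eval v (Qp a b G))
        - (k : ℂ) ^ 2 * (eval v (Dp a b G)) ^ 2 = 0 := by
      have h0 := congrArg (eval v) hW
      simp only [EH, map_add, map_sub, map_mul, map_pow, eval_C, hvL, zero_mul,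
        mul_zero, add_zero] at h0
      linear_combination h0
    rw [hqval, hdval] at heq
    have hfac : ((n' : ℂ) + 1) * (k : ℂ) * ((n' : ℂ) + (k : ℂ)) * (eval v G) ^ 2 = 0 := by
      linear_combination (-1 : ℂ) * heq
    exact (mul_ne_zero (mul_ne_zero (mul_ne_zero hn1 hk0) hnk) hg2) hfac
  · refine ⟨⟨ED a b k G L, hid2⟩, ?_⟩
    intro hdd
    rw [hid2] at hdd
    have hstep : L ^ (3 * k - 2) * L ∣ L ^ (3 * k - 2) * ED a b k G L := by
      rw [← pow_succ]
      have he : 3 * k - 2 + 1 = 3 * k - 1 := by omega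
      rw [he]
      exact hdd
    obtain ⟨W, hW⟩ := (mul_dvd_mul_iff_left (pow_ne_zero (3 * k - 2) hL0)).mp hstep
    have heq : (k : ℂ) * ((k : ℂ) + 1) * (eval v G * (eval v (Dp a b G)) ^ 2)
        - (k : ℂ) ^ 2 * ((eval v G) ^ 2 * eval v (Qp a b G)) = 0 := by
      have h0 := congrArg (eval v) hW
      simp only [ED, map_add, map_sub, map_mul, map_pow, eval_C, hvL, zero_mul,
        mul_zero, add_zero, sub_zero] at h0
      linear_combination h0
    rw [hqval, hdval] at heq
    have hfac : ((n' : ℂ) + 1) * (k : ℂ) * ((n' : ℂ) + 1 + (k : ℂ)) * (eval v G) ^ 3 = 0 := by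
      linear_combination heq
    exact (mul_ne_zero (mul_ne_zero (mul_ne_zero hn1 hk0) hnk1) hg3) hfac
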